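/- Let G be a group, H a Hilbert space, and ξ, η : G → H bounded functions with ‖ξ‖_∞ = ‖η‖_∞ = 1, and suppose E ⊆ G contains the identity and satisfies χ_E(x y⁻¹) = ⟨ξ(x), η(y)⟩ for all x, y. Then ξ(e) = η(e), and E = {x ∈ G : ξ(x) = ξ(e)} = {y ∈ G : η(y⁻¹) = ξ(e)}. -/

import Mathlib

open scoped Pointwise
open Classical

lemma aux_eq {H : Type*} [NormedAddCommGroup H] [InnerProductSpace ℂ H]
    {a b : H} (ha : ‖a‖ ≤ 1) (hb : ‖b‖ ≤ 1)
    (h : inner ℂ a b = (1 : ℂ)) : a = b := by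
  have hre : RCLike.re (inner ℂ a b : ℂ) = 1 := by rw [h]; simp
  have hsq : ‖a - b‖ ^ 2 = ‖a‖ ^ 2 - 2 * RCLike.re (inner ℂ a b : ℂ) + ‖b‖ ^ 2 :=
    @norm_sub_sq ℂ _ _ _ _ a b
  have h0 : (0:ℝ) ≤ ‖a‖ := norm_nonneg a
  have h0' : (0:ℝ) ≤ ‖b‖ := norm_nonneg b
  have : ‖a - b‖ ^ 2 ≤ 0 := by
    rw [hsq, hre]
    nlinarith
  have : ‖a - b‖ = 0 := by nlinarith [norm_nonneg (a - b)]
  exact sub_eq_zero.mp (norm_eq_zero.mp this)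

theorem stmt_8 {G : Type*} [Group G] {H : Type*} [NormedAddCommGroup H]
    [InnerProductSpace ℂ H] (ξ η : G → H)
    (hξ : ∀ x, ‖ξ x‖ ≤ 1) (hη : ∀ y, ‖η y‖ ≤ 1)
    (hξsup : ⨆ x, ‖ξ x‖ = 1) (hηsup : ⨆ y, ‖η y‖ = 1)
    (E : Set G) (hE : (1 : G) ∈ E)
    (hrep : ∀ x y : G, (if x * y⁻¹ ∈ E then (1 : ℂ) else 0) = inner ℂ (ξ x) (η y)) :
    ξ 1 = η 1 ∧ E = {x : G | ξ x = ξ 1} ∧ E = {y : G | η y⁻¹ = ξ 1} := by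
  have key : ∀ x y : G, x * y⁻¹ ∈ E ↔ inner ℂ (ξ x) (η y) = (1 : ℂ) := by
    intro x y
    constructor
    · intro h; rw [← hrep x y, if_pos h]
    · intro h
      by_contra hc
      have := hrep x y
      rw [if_neg hc, h] at this
      exact zero_ne_one this
  have h11 : inner ℂ (ξ 1) (η 1) = (1 : ℂ) := (key 1 1).mp (by simpa using hE)
  have hξη : ξ 1 = η 1 := aux_eq (hξ 1) (hη 1) h11
  have hnorm : inner ℂ (ξ 1) (ξ 1) = (1 : ℂ) := by rw [hξη] at h11 ⊢; exact h11
  refine ⟨hξη, ?_, ?_⟩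
  · ext x
    simp only [Set.mem_setOf_eq]
    constructor
    · intro hx
      have : inner ℂ (ξ x) (η 1) = (1 : ℂ) := (key x 1).mp (by simpa using hx)
      have := aux_eq (hξ x) (hη 1) this
      rw [this, hξη]
    · intro hx
      have : inner ℂ (ξ x) (η 1) = (1 : ℂ) := by rw [hx, ← hξη]; exact hnorm
      have := (key x 1).mpr this
      simpa using this
  · ext y
    simp only [Set.mem_setOf_eq]
    constructor
    · intro hy
      have : inner ℂ (ξ 1) (η y⁻¹) = (1 : ℂ) := (key 1 y⁻¹).mp (by simpa using hy)
      have hconj : inner ℂ (η y⁻¹) (ξ 1) = (1 : ℂ) := by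
        rw [← inner_conj_symm, this]; simp
      exact aux_eq (hη y⁻¹) (hξ 1) hconj
    · intro hy
      have : inner ℂ (ξ 1) (η y⁻¹) = (1 : ℂ) := by rw [hy]; exact hnorm
      have := (key 1 y⁻¹).mpr this
      simpa using this
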